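/- Let F be a field, and let E = [[a,b],[a(1−a)b⁻¹, 1−a]] and E₁ = [[a₁,b₁],[a₁(1−a₁)b₁⁻¹, 1−a₁]] with a, a₁ ∉ {0,1} and b, b₁ ≠ 0. Then E·E₁ = 0 if and only if b₁ = −(1−a₁)a⁻¹b. -/

import Mathlib

theorem stmt_8 (F : Type*) [Field F] (a b a₁ b₁ : F) (ha0 : a ≠ 0) (ha1 : a ≠ 1) (hb : b ≠ 0)
    (ha₁0 : a₁ ≠ 0) (ha₁1 : a₁ ≠ 1) (hb₁ : b₁ ≠ 0) :
    (!![a, b; a * (1 - a) * b⁻¹, 1 - a] : Matrix (Fin 2) (Fin 2) F) *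
        !![a₁, b₁; a₁ * (1 - a₁) * b₁⁻¹, 1 - a₁] = 0 ↔
      b₁ = -(1 - a₁) * a⁻¹ * b := by
  have h1 : (1:F) - a ≠ 0 := sub_ne_zero.mpr (Ne.symm ha1)
  have h2 : (1:F) - a₁ ≠ 0 := sub_ne_zero.mpr (Ne.symm ha₁1)
  rw [Matrix.mul_fin_two, ← Matrix.ext_iff]
  simp only [Fin.forall_fin_two, Matrix.cons_val', Matrix.cons_val_zero, Matrix.cons_val_one,
    Matrix.head_cons, Matrix.empty_val', Matrix.cons_val_fin_one, Matrix.head_fin_const,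
    Matrix.zero_apply, Matrix.of_apply]
  constructor
  · rintro ⟨⟨-, h⟩, -⟩
    field_simp
    linear_combination h
  · intro h
    have hinv : b₁⁻¹ = -(a * ((1 - a₁)⁻¹ * b⁻¹)) := by
      rw [h]
      field_simp
    rw [hinv, h]
    refine ⟨⟨?_, ?_⟩, ?_, ?_⟩ <;> field_simp <;> ring
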